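/- In the greedy LZ-End factorization of T = B(p)·x·A(p)·∏_{i=1}^{p²} (#_i · B(l_i) · x · A(r_i)) over the alphabet {a_1,...,a_p, b_1,...,b_p, x, #_1,...,#_{p²}} (p ≥ 2), where A(i) = a_1···a_i, B(i) = b_i···b_1, and (l_i, r_i) enumerates [1,p]² sorted by (l+r, l), the number of phrases is exactly 2p² + 2p + 1. -/

import Mathlib

/-- `fs` is the greedy LZ-End factorization of `T`: each phrase is the longest
prefix of the remaining suffix that is a suffix of `f_1⋯f_m` for some `m < k`
(a previous occurrence ending at a phrase boundary), or a single character otherwise. -/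
def IsGreedyLZEnd {α : Type*} (T : List α) (fs : List (List α)) : Prop :=
  fs.flatten = T ∧ ∀ (k : ℕ) (hk : k < fs.length),
    fs.get ⟨k, hk⟩ ≠ [] ∧
    (∀ ℓ : ℕ, ℓ ≤ T.length - ((fs.take k).flatten).length →
      (∃ m < k, (T.drop ((fs.take k).flatten).length).take ℓ <:+ (fs.take m).flatten) →
      ℓ ≤ (fs.get ⟨k, hk⟩).length) ∧
    ((fs.get ⟨k, hk⟩).length = 1 ∨
      ∃ m < k, fs.get ⟨k, hk⟩ <:+ (fs.take m).flatten)

/-- Characters: `a i`, `b i`, `x`, `#_j`, pairwise distinct. -/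
def chA (i : ℕ) : ℕ := 4 * i
def chB (i : ℕ) : ℕ := 4 * i + 1
def chX : ℕ := 1
def chHash (j : ℕ) : ℕ := 4 * j + 3

/-- `A(i) = a_1⋯a_i`. -/
def strA (i : ℕ) : List ℕ := (List.range i).map fun t => chA (t + 1)
/-- `B(i) = b_i⋯b_1`. -/
def strB (i : ℕ) : List ℕ := ((List.range i).map fun t => chB (t + 1)).reverse

/-- `Pair(p)`: all pairs `(l, r) ∈ [1,p]²` ordered by increasing `l + r`, then by
increasing `l`. -/
def pairList (p : ℕ) : List (ℕ × ℕ) :=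
  ((List.range' 2 (2 * p - 1)).map fun k =>
    (List.range' (max 1 (k - p)) (min p (k - 1) + 1 - max 1 (k - p))).map
      fun l => (l, k - l)).flatten

/-- `T = B(p)·x·A(p)·∏_{i=1}^{p²} (#_i · B(l_i) · x · A(r_i))`. -/
def TEnd (p : ℕ) : List ℕ :=
  strB p ++ [chX] ++ strA p ++
  (((pairList p).zipIdx).map fun q =>
    chHash (q.2 + 1) :: (strB q.1.1 ++ [chX] ++ strA q.1.2)).flatten

def List.enum {α : Type*} (l : List α) : List (ℕ × α) := l.zipIdx.map Prod.swap

@[simp] lemma List.length_enum {α : Type*} (l : List α) : l.enum.length = l.length := by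
  simp [List.enum]

lemma List.getElem_enum {α : Type*} (l : List α) (i : ℕ) (h : i < l.enum.length) :
    l.enum[i] = (i, l[i]'(by simpa using h)) := by
  simp [List.enum, List.getElem_zipIdx]

section Generic
variable {α : Type*}

lemma flatten_take_prefix (l : List (List α)) (m : ℕ) : (l.take m).flatten <+: l.flatten :=
  ⟨(l.drop m).flatten, by rw [← List.flatten_append, List.take_append_drop]⟩

lemma flatten_take_eq_take {T : List α} {fs : List (List α)} (h : fs.flatten = T) (k : ℕ) :
    (fs.take k).flatten = T.take ((fs.take k).flatten).length := by
  have h2 := flatten_take_prefix fs k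
  rw [h] at h2
  exact List.prefix_iff_eq_take.mp h2

lemma flatten_take_le {fs : List (List α)} {m k : ℕ} (h : m ≤ k) :
    ((fs.take m).flatten).length ≤ ((fs.take k).flatten).length := by
  have h2 : fs.take m = (fs.take k).take m := by rw [List.take_take, min_eq_left h]
  rw [h2]
  exact (flatten_take_prefix (fs.take k) m).length_le

lemma drop_flatten_take {T : List α} {fs : List (List α)} (hT : fs.flatten = T) {k : ℕ}
    (hk : k < fs.length) :
    T.drop ((fs.take k).flatten).length = fs.get ⟨k, hk⟩ ++ (fs.drop (k + 1)).flatten := by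
  have h1 : fs.flatten = (fs.take k).flatten ++ (fs.drop k).flatten := by
    rw [← List.flatten_append, List.take_append_drop]
  have h2 : fs.drop k = fs.get ⟨k, hk⟩ :: fs.drop (k + 1) := by
    rw [List.drop_eq_getElem_cons hk, List.get_eq_getElem]
  rw [← hT, h1, List.drop_left, h2, List.flatten_cons]

/-- Key bound: if the character at offset `u` from the current position is fresh
(doesn't occur in the prefix), then any admissible ℓ is at most `u`. -/
lemma lzend_bound {T : List α} {fs : List (List α)} (hT : fs.flatten = T) {k u : ℕ} {c : α}
    (hc : (T.drop ((fs.take k).flatten).length)[u]? = some c)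
    (hnot : c ∉ T.take ((fs.take k).flatten).length)
    {ℓ : ℕ} (hocc : ∃ m < k, ((T.drop ((fs.take k).flatten).length).take ℓ) <:+ (fs.take m).flatten) :
    ℓ ≤ u := by
  by_contra hlt
  push_neg at hlt
  obtain ⟨m, hm, hw⟩ := hocc
  apply hnot
  have hcmem : c ∈ (T.drop ((fs.take k).flatten).length).take ℓ := by
    have h1 : ((T.drop ((fs.take k).flatten).length).take ℓ)[u]? = some c := by
      rw [List.getElem?_take_of_lt hlt]; exact hc
    exact List.mem_of_getElem? h1
  have hcm : c ∈ (fs.take m).flatten := hw.subset hcmem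
  rw [flatten_take_eq_take hT m] at hcm
  have hle : ((fs.take m).flatten).length ≤ ((fs.take k).flatten).length :=
    flatten_take_le (le_of_lt hm)
  have : T.take ((fs.take m).flatten).length = (T.take ((fs.take k).flatten).length).take ((fs.take m).flatten).length := by
    rw [List.take_take, min_eq_left hle]
  rw [this] at hcm
  exact List.take_subset _ _ hcm

lemma phrase_eq_take {T : List α} {fs : List (List α)} (hT : fs.flatten = T) {k : ℕ}
    (hk : k < fs.length) :
    fs.get ⟨k, hk⟩ = (T.drop ((fs.take k).flatten).length).take (fs.get ⟨k, hk⟩).length := by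
  rw [drop_flatten_take hT hk, List.take_left]

lemma lzend_lt_length {T : List α} {fs gs : List (List α)}
    (hf : IsGreedyLZEnd T fs) (hg : IsGreedyLZEnd T gs) {k : ℕ}
    (htake : fs.take k = gs.take k) (hkf : k < fs.length) : k < gs.length := by
  by_contra h
  push_neg at h
  have h1 : gs.take k = gs := List.take_of_length_le h
  have h2 : (fs.take k).flatten = T := by rw [htake, h1, hg.1]
  have h3 := drop_flatten_take hf.1 hkf
  rw [h2, List.drop_length] at h3
  exact (hf.2 k hkf).1 (List.append_eq_nil_iff.mp h3.symm).1

lemma lzend_get_eq {T : List α} {fs gs : List (List α)}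
    (hf : IsGreedyLZEnd T fs) (hg : IsGreedyLZEnd T gs) {k : ℕ}
    (hkf : k < fs.length) (hkg : k < gs.length)
    (htake : fs.take k = gs.take k) : fs.get ⟨k, hkf⟩ = gs.get ⟨k, hkg⟩ := by
  set u := fs.get ⟨k, hkf⟩ with hu
  set v := gs.get ⟨k, hkg⟩ with hv
  have hposg : ((gs.take k).flatten).length = ((fs.take k).flatten).length := by rw [htake]
  have hulen : u.length ≤ T.length - ((fs.take k).flatten).length := by
    have := phrase_eq_take hf.1 hkf
    rw [← hu] at this
    have h2 : u.length ≤ (T.drop ((fs.take k).flatten).length).length := by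
      conv_lhs => rw [this]
      exact (List.length_take).trans_le (min_le_right _ _)
    simpa using h2
  have hvlen : v.length ≤ T.length - ((fs.take k).flatten).length := by
    have := phrase_eq_take hg.1 hkg
    rw [← hv] at this
    have h2 : v.length ≤ (T.drop ((gs.take k).flatten).length).length := by
      conv_lhs => rw [this]
      exact (List.length_take).trans_le (min_le_right _ _)
    rw [hposg] at h2
    simpa using h2
  -- if u.length ≥ 2, it is admissible, hence ≤ v.length
  have huv : 2 ≤ u.length → u.length ≤ v.length := by
    intro h2
    rcases (hf.2 k hkf).2.2 with h1 | ⟨m, hm, hsuf⟩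
    · rw [← hu] at h1; omega
    · apply (hg.2 k hkg).2.1 u.length (by rwa [hposg])
      refine ⟨m, hm, ?_⟩
      have hm' : gs.take m = fs.take m := by
        have h3 : (gs.take k).take m = (fs.take k).take m := by rw [htake]
        rwa [List.take_take, List.take_take, min_eq_left (le_of_lt hm)] at h3
      rw [hposg, hm']
      rw [← phrase_eq_take hf.1 hkf]
      exact hsuf
  have hvu : 2 ≤ v.length → v.length ≤ u.length := by
    intro h2
    rcases (hg.2 k hkg).2.2 with h1 | ⟨m, hm, hsuf⟩
    · rw [← hv] at h1; omega
    · apply (hf.2 k hkf).2.1 v.length hvlen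
      refine ⟨m, hm, ?_⟩
      have hm' : fs.take m = gs.take m := by
        have h3 : (fs.take k).take m = (gs.take k).take m := by rw [htake]
        rwa [List.take_take, List.take_take, min_eq_left (le_of_lt hm)] at h3
      rw [hm']
      have := phrase_eq_take hg.1 hkg
      rw [← hv, hposg] at this
      rw [← this]
      exact hsuf
  have hune : u ≠ [] := (hf.2 k hkf).1
  have hvne : v ≠ [] := (hg.2 k hkg).1
  have hlen : u.length = v.length := by
    have h1 : 1 ≤ u.length := List.length_pos_iff.mpr hune
    have h2 : 1 ≤ v.length := List.length_pos_iff.mpr hvne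
    rcases Nat.lt_or_ge u.length 2 with h | h
    · rcases Nat.lt_or_ge v.length 2 with h' | h'
      · omega
      · have := hvu h'; omega
    · have := huv h
      rcases Nat.lt_or_ge v.length 2 with h' | h'
      · omega
      · have := hvu h'; omega
  have e1 := phrase_eq_take hf.1 hkf
  have e2 := phrase_eq_take hg.1 hkg
  rw [← hu] at e1
  rw [← hv, hposg] at e2
  rw [e1, e2, hlen]

lemma lzend_unique {T : List α} {fs gs : List (List α)}
    (hf : IsGreedyLZEnd T fs) (hg : IsGreedyLZEnd T gs) : fs = gs := by
  have key : ∀ k, fs.take k = gs.take k := by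
    intro k
    induction k with
    | zero => simp
    | succ k ih =>
      rcases Nat.lt_or_ge k fs.length with hkf | hkf
      · have hkg := lzend_lt_length hf hg ih hkf
        have hge := lzend_get_eq hf hg hkf hkg ih
        simp only [List.get_eq_getElem] at hge
        rw [List.take_succ, List.take_succ, ih, List.getElem?_eq_getElem hkf,
          List.getElem?_eq_getElem hkg, hge]
      · have hkg : gs.length ≤ k := by
          by_contra h
          push_neg at h
          exact absurd (lzend_lt_length hg hf ih.symm h) (by omega)
        rw [List.take_of_length_le (by omega), List.take_of_length_le (by omega),
          ← List.take_of_length_le hkf, ← List.take_of_length_le hkg, ih]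
  have h1 := key (max fs.length gs.length)
  rwa [List.take_of_length_le (le_max_left _ _), List.take_of_length_le (le_max_right _ _)] at h1

end Generic

def baseStr (p : ℕ) : List ℕ := strB p ++ [chX] ++ strA p
def bodyOf (v : ℕ × ℕ × ℕ) : List ℕ := strB v.2.1 ++ [chX] ++ strA v.2.2
def tailT (V : List (ℕ × ℕ × ℕ)) : List ℕ :=
  (V.map fun v => chHash (v.1 + 1) :: bodyOf v).flatten
def tailF (V : List (ℕ × ℕ × ℕ)) : List (List ℕ) :=
  (V.map fun v => [[chHash (v.1 + 1)], bodyOf v]).flatten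
def FS (p : ℕ) : List (List ℕ) :=
  ((baseStr p).map fun c => [c]) ++ tailF ((pairList p).enum)

lemma TEnd_eq (p : ℕ) : TEnd p = baseStr p ++ tailT ((pairList p).enum) := by
  unfold TEnd tailT List.enum; rw [List.map_map]; rfl

@[simp] lemma strA_length (i : ℕ) : (strA i).length = i := by simp [strA]
@[simp] lemma strB_length (i : ℕ) : (strB i).length = i := by simp [strB]
lemma baseStr_length (p : ℕ) : (baseStr p).length = 2 * p + 1 := by
  simp [baseStr]; omega

lemma mem_strA {c i : ℕ} (h : c ∈ strA i) : ∃ t, 1 ≤ t ∧ t ≤ i ∧ c = 4 * t := by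
  simp [strA, chA] at h
  obtain ⟨t, ht, rfl⟩ := h
  exact ⟨t + 1, by omega, by omega, by ring⟩

lemma mem_strB {c i : ℕ} (h : c ∈ strB i) : ∃ t, 1 ≤ t ∧ t ≤ i ∧ c = 4 * t + 1 := by
  simp [strB, chB] at h
  obtain ⟨t, ht, rfl⟩ := h
  exact ⟨t + 1, by omega, by omega, by ring⟩

lemma hash_not_mem_bodyOf (j : ℕ) (v : ℕ × ℕ × ℕ) : chHash j ∉ bodyOf v := by
  intro h
  simp only [bodyOf, List.mem_append, List.mem_singleton] at h
  rcases h with (h | h) | h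
  · obtain ⟨t, _, _, ht⟩ := mem_strB h; simp [chHash] at ht; omega
  · simp [chHash, chX] at h
  · obtain ⟨t, _, _, ht⟩ := mem_strA h; simp [chHash] at ht; omega

lemma hash_not_mem_base (j p : ℕ) : chHash j ∉ baseStr p :=
  hash_not_mem_bodyOf j (0, p, p)

lemma hash_not_mem_tailT {j : ℕ} {V : List (ℕ × ℕ × ℕ)}
    (hV : ∀ v ∈ V, v.1 + 1 ≠ j) : chHash j ∉ tailT V := by
  intro h
  simp only [tailT, List.mem_flatten, List.mem_map] at h
  obtain ⟨l, ⟨v, hv, rfl⟩, hc⟩ := h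
  rcases List.mem_cons.mp hc with h | h
  · have : v.1 + 1 = j := by simp [chHash] at h; omega
    exact hV v hv this
  · exact hash_not_mem_bodyOf j v h

lemma strA_nodup (i : ℕ) : (strA i).Nodup :=
  List.Nodup.map (fun a b h => by simp [chA] at h; omega) (List.nodup_range)

lemma strB_nodup (i : ℕ) : (strB i).Nodup := by
  rw [strB, List.nodup_reverse]
  exact List.Nodup.map (fun a b h => by simp [chB] at h; omega) (List.nodup_range)

lemma baseStr_nodup (p : ℕ) : (baseStr p).Nodup := by
  rw [baseStr, List.nodup_append, List.nodup_append]
  refine ⟨⟨strB_nodup p, List.nodup_singleton _, ?_⟩, strA_nodup p, ?_⟩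
  · intro c hc d hd
    obtain ⟨t, _, _, rfl⟩ := mem_strB hc
    simp only [List.mem_singleton, chX] at hd
    omega
  · intro c hc d hd
    obtain ⟨t, _, _, rfl⟩ := mem_strA hd
    rcases List.mem_append.mp hc with h | h
    · obtain ⟨s, _, _, hs⟩ := mem_strB h; omega
    · simp only [List.mem_singleton, chX] at h; omega

lemma not_mem_take_of_nodup {α : Type*} {l : List α} (h : l.Nodup) {k : ℕ}
    (hk : k < l.length) : l[k] ∉ l.take k := by
  intro hm
  rw [List.mem_take_iff_getElem] at hm
  obtain ⟨i, hi, he⟩ := hm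
  have hil : i < l.length := lt_of_lt_of_le hi (min_le_right _ _)
  have hik : i = k := (List.Nodup.getElem_inj_iff h (hi := hil) (hj := hk)).mp he
  omega

lemma strA_take {r p : ℕ} (h : r ≤ p) : (strA p).take r = strA r := by
  conv_lhs => rw [strA, ← List.map_take, List.take_range, min_eq_left h]
  rfl

lemma strB_suffix {l p : ℕ} (h : l ≤ p) : strB l <:+ strB p := by
  rw [strB, strB]
  apply List.reverse_suffix.mpr
  have : (List.range l).map (fun t => chB (t+1)) = (((List.range p).map fun t => chB (t+1)).take l) := by
    rw [← List.map_take, List.take_range, min_eq_left h]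
  rw [this]
  exact List.take_prefix _ _

lemma body_suffix {l r p : ℕ} (hl : l ≤ p) :
    (strB l ++ [chX] ++ strA r) <:+ (strB p ++ [chX] ++ strA r) := by
  obtain ⟨w, hw⟩ := strB_suffix hl
  exact ⟨w, by rw [← hw]; simp⟩

lemma baseStr_take {r p : ℕ} (h : r ≤ p) :
    (baseStr p).take (p + 1 + r) = strB p ++ [chX] ++ strA r := by
  have h1 : (strB p ++ [chX]).length = p + 1 := by simp
  have h2 : baseStr p = (strB p ++ [chX]) ++ strA p := rfl
  rw [h2, show p + 1 + r = (strB p ++ [chX]).length + r by rw [h1], List.take_length_add_append,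
    strA_take h]

lemma pair_bounds {p : ℕ} {q : ℕ × ℕ} (hq : q ∈ pairList p) :
    1 ≤ q.1 ∧ q.1 ≤ p ∧ 1 ≤ q.2 ∧ q.2 ≤ p := by
  simp only [pairList, List.mem_flatten, List.mem_map] at hq
  obtain ⟨l', ⟨k, hk, rfl⟩, hq⟩ := hq
  simp only [List.mem_map, List.mem_range'] at hq
  obtain ⟨l, hl, rfl⟩ := hq
  rw [List.mem_range'] at hk
  simp only
  omega

lemma tailT_append (A B : List (ℕ × ℕ × ℕ)) : tailT (A ++ B) = tailT A ++ tailT B := by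
  simp [tailT]

lemma tailF_cons (v : ℕ × ℕ × ℕ) (V : List (ℕ × ℕ × ℕ)) :
    tailF (v :: V) = [chHash (v.1 + 1)] :: bodyOf v :: tailF V := rfl

lemma tailT_cons (v : ℕ × ℕ × ℕ) (V : List (ℕ × ℕ × ℕ)) :
    tailT (v :: V) = (chHash (v.1 + 1) :: bodyOf v) ++ tailT V := rfl

lemma tailF_flatten (V : List (ℕ × ℕ × ℕ)) : (tailF V).flatten = tailT V := by
  induction V with
  | nil => rfl
  | cons v V ih => rw [tailF_cons, tailT_cons]; simp [ih]

lemma tailF_length (V : List (ℕ × ℕ × ℕ)) : (tailF V).length = 2 * V.length := by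
  induction V with
  | nil => rfl
  | cons v V ih => rw [tailF_cons]; simp [ih]; omega

lemma tailF_get_even (V : List (ℕ × ℕ × ℕ)) (j : ℕ) (hj : j < V.length) :
    (tailF V)[2 * j]? = some [chHash (V[j].1 + 1)] := by
  induction V generalizing j with
  | nil => simp at hj
  | cons v V ih =>
    rcases j with _ | j
    · rfl
    · have h2 : 2 * (j + 1) = (2 * j) + 1 + 1 := by ring
      rw [tailF_cons, h2]
      simp only [List.getElem?_cons_succ]
      rw [ih j (by simpa using hj)]
      simp

lemma tailF_get_odd (V : List (ℕ × ℕ × ℕ)) (j : ℕ) (hj : j < V.length) :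
    (tailF V)[2 * j + 1]? = some (bodyOf V[j]) := by
  induction V generalizing j with
  | nil => simp at hj
  | cons v V ih =>
    rcases j with _ | j
    · rfl
    · have h2 : 2 * (j + 1) + 1 = (2 * j + 1) + 1 + 1 := by ring
      rw [tailF_cons, h2]
      simp only [List.getElem?_cons_succ]
      rw [ih j (by simpa using hj)]
      simp

lemma tailF_take_even (V : List (ℕ × ℕ × ℕ)) (j : ℕ) :
    ((tailF V).take (2 * j)).flatten = tailT (V.take j) := by
  induction V generalizing j with
  | nil => simp [tailF, tailT]
  | cons v V ih =>
    rcases j with _ | j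
    · rfl
    · have h2 : 2 * (j + 1) = (2 * j) + 1 + 1 := by ring
      rw [tailF_cons, h2, List.take_succ_cons, List.take_succ_cons, List.flatten_cons,
        List.flatten_cons, ih j]
      simp [tailT_cons]

lemma tailF_take_odd (V : List (ℕ × ℕ × ℕ)) (j : ℕ) (hj : j < V.length) :
    ((tailF V).take (2 * j + 1)).flatten = tailT (V.take j) ++ [chHash (V[j].1 + 1)] := by
  induction V generalizing j with
  | nil => simp at hj
  | cons v V ih =>
    rcases j with _ | j
    · simp [tailF_cons, tailT]
    · have h2 : 2 * (j + 1) + 1 = (2 * j + 1) + 1 + 1 := by ring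
      rw [tailF_cons, h2, List.take_succ_cons, List.take_succ_cons]
      rw [List.flatten_cons, List.flatten_cons, ih j (by simpa using hj)]
      simp [tailT_cons, tailT]

lemma flat_single (l : List ℕ) : (l.map fun c => [c]).flatten = l := by
  induction l <;> simp [*]

lemma head_length (p : ℕ) : (((baseStr p).map fun c => [c]) : List (List ℕ)).length = 2 * p + 1 := by
  simp [baseStr_length]

lemma FS_length (p : ℕ) : (FS p).length = 2 * p + 1 + 2 * (pairList p).length := by
  simp [FS, tailF_length, baseStr_length]

lemma FS_flatten (p : ℕ) : (FS p).flatten = TEnd p := by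
  rw [FS, TEnd_eq, List.flatten_append, tailF_flatten, flat_single]

lemma FS_get_head {p k : ℕ} (hk : k < 2 * p + 1) :
    (FS p)[k]? = some [(baseStr p)[k]'(by rw [baseStr_length]; exact hk)] := by
  rw [FS, List.getElem?_append_left (by rw [head_length]; exact hk), List.getElem?_map,
    List.getElem?_eq_getElem (by rw [baseStr_length]; exact hk)]
  rfl

lemma FS_take_head {p k : ℕ} (hk : k ≤ 2 * p + 1) :
    ((FS p).take k).flatten = (baseStr p).take k := by
  rw [FS, List.take_append_of_le_length (by rw [head_length]; exact hk), ← List.map_take,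
    flat_single]

lemma FS_get_tail (p t : ℕ) :
    (FS p)[2 * p + 1 + t]? = (tailF ((pairList p).enum))[t]? := by
  rw [FS, List.getElem?_append_right (by rw [head_length]; omega)]
  congr 1
  rw [head_length]
  omega

lemma FS_take_tail (p t : ℕ) :
    ((FS p).take (2 * p + 1 + t)).flatten =
      baseStr p ++ ((tailF ((pairList p).enum)).take t).flatten := by
  rw [FS, show 2 * p + 1 + t = (((baseStr p).map fun c => [c]) : List (List ℕ)).length + t by
    rw [head_length], List.take_length_add_append, List.flatten_append, flat_single]

lemma T_decomp (p j : ℕ) :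
    TEnd p = (baseStr p ++ tailT (((pairList p).enum).take j)) ++
      tailT (((pairList p).enum).drop j) := by
  rw [TEnd_eq, List.append_assoc, ← tailT_append, List.take_append_drop]

lemma enum_fst {p j : ℕ} (hj : j < (pairList p).length) :
    ((pairList p).enum)[j]'(by simpa using hj) = (j, (pairList p)[j]) :=
  List.getElem_enum _ _ _

lemma enum_take_fst {p j : ℕ} {v : ℕ × ℕ × ℕ} (hv : v ∈ ((pairList p).enum).take j) :
    v.1 < j := by
  rw [List.mem_take_iff_getElem] at hv
  obtain ⟨i, hi, he⟩ := hv
  have h2 : i < (pairList p).length := by simpa using lt_of_lt_of_le hi (min_le_right _ _)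
  rw [enum_fst h2] at he
  rw [← he]
  exact lt_of_lt_of_le hi (min_le_left _ _)

-- MAIN PART (appended after d/e content)

lemma get_of_get? {α : Type*} {l : List α} {k : ℕ} {x : α} (hk : k < l.length)
    (h : l[k]? = some x) : l.get ⟨k, hk⟩ = x := by
  rw [List.getElem?_eq_getElem hk] at h
  exact Option.some.inj h

lemma FS_greedy (p : ℕ) (hp : 2 ≤ p) : IsGreedyLZEnd (TEnd p) (FS p) := by
  have hT := FS_flatten p
  refine ⟨hT, fun k hk => ?_⟩
  have hkL : k < 2 * p + 1 + 2 * (pairList p).length := by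
    rw [← FS_length]; exact hk
  rcases Nat.lt_or_ge k (2 * p + 1) with hk1 | hk1
  · -- head singleton phrase
    have hb : k < (baseStr p).length := by rw [baseStr_length]; exact hk1
    have hget : (FS p).get ⟨k, hk⟩ = [(baseStr p)[k]'hb] :=
      get_of_get? hk (FS_get_head hk1)
    have hpre : ((FS p).take k).flatten = (baseStr p).take k := FS_take_head hk1.le
    have hlen : (((FS p).take k).flatten).length = k := by
      rw [hpre, List.length_take, baseStr_length]; omega
    refine ⟨by rw [hget]; simp, ?_, by rw [hget]; left; rfl⟩
    intro ℓ hℓ hocc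
    have hc : ((TEnd p).drop (((FS p).take k).flatten).length)[0]?
        = some ((baseStr p)[k]'hb) := by
      rw [List.getElem?_drop, hlen, Nat.add_zero, TEnd_eq, List.getElem?_append_left hb,
        List.getElem?_eq_getElem hb]
    have hnot : (baseStr p)[k]'hb ∉ (TEnd p).take (((FS p).take k).flatten).length := by
      rw [hlen, TEnd_eq, List.take_append_of_le_length hb.le]
      exact not_mem_take_of_nodup (baseStr_nodup p) hb
    have hbd := lzend_bound hT hc hnot hocc
    rw [hget]
    simp
    omega
  · -- tail phrases
    obtain ⟨j, hj⟩ : ∃ j, k = 2 * p + 1 + 2 * j ∨ k = 2 * p + 1 + (2 * j + 1) :=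
      ⟨(k - (2 * p + 1)) / 2, by omega⟩
    have hjP : j < (pairList p).length := by omega
    have hjV : j < ((pairList p).enum).length := by simpa using hjP
    have hdrop : tailT (((pairList p).enum).drop j)
        = chHash (j + 1) :: (bodyOf (((pairList p).enum)[j]'hjV)
          ++ tailT (((pairList p).enum).drop (j + 1))) := by
      rw [List.drop_eq_getElem_cons hjV, tailT_cons]
      rw [show ((((pairList p).enum)[j]'hjV).1 + 1) = j + 1 by rw [enum_fst hjP]]
      rfl
    rcases hj with hj | hj
    · -- hash phrase
      have hget : (FS p).get ⟨k, hk⟩ = [chHash (j + 1)] := by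
        apply get_of_get? hk
        rw [hj, FS_get_tail]
        rw [tailF_get_even _ j hjV, enum_fst hjP]
      have hpre : ((FS p).take k).flatten
          = baseStr p ++ tailT (((pairList p).enum).take j) := by
        rw [hj, FS_take_tail, tailF_take_even]
      have hdec : TEnd p = (baseStr p ++ tailT (((pairList p).enum).take j))
          ++ tailT (((pairList p).enum).drop j) := T_decomp p j
      refine ⟨by rw [hget]; simp, ?_, by rw [hget]; left; rfl⟩
      intro ℓ hℓ hocc
      have hc : ((TEnd p).drop (((FS p).take k).flatten).length)[0]?
          = some (chHash (j + 1)) := by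
        rw [hpre]
        conv_lhs => rw [hdec]
        rw [List.drop_left, hdrop]
        rfl
      have hnot : chHash (j + 1) ∉ (TEnd p).take (((FS p).take k).flatten).length := by
        rw [hpre, hdec, List.take_left]
        intro hmem
        rcases List.mem_append.mp hmem with h | h
        · exact hash_not_mem_base _ _ h
        · exact hash_not_mem_tailT (fun v hv => by have := enum_take_fst hv; omega) h
      have hbd := lzend_bound hT hc hnot hocc
      rw [hget]
      simp
      omega
    · -- body phrase
      have hbnd := pair_bounds (List.getElem_mem hjP)
      have hget : (FS p).get ⟨k, hk⟩ = bodyOf (((pairList p).enum)[j]'hjV) := by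
        apply get_of_get? hk
        rw [hj, FS_get_tail]
        exact tailF_get_odd _ j hjV
      have hbody : bodyOf (((pairList p).enum)[j]'hjV)
          = strB (pairList p)[j].1 ++ [chX] ++ strA (pairList p)[j].2 := by
        rw [enum_fst hjP]
        rfl
      have hpre : ((FS p).take k).flatten
          = (baseStr p ++ tailT (((pairList p).enum).take j)) ++ [chHash (j + 1)] := by
        rw [hj, FS_take_tail, tailF_take_odd _ j hjV, enum_fst hjP, ← List.append_assoc]
      have hdec2 : TEnd p = ((baseStr p ++ tailT (((pairList p).enum).take j))
          ++ [chHash (j + 1)])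
          ++ (bodyOf (((pairList p).enum)[j]'hjV)
            ++ tailT (((pairList p).enum).drop (j + 1))) := by
        rw [T_decomp p j, hdrop]
        simp [List.append_assoc]
      refine ⟨?_, ?_, ?_⟩
      · rw [hget, hbody]
        simp
      · -- maximality
        intro ℓ hℓ hocc
        rcases Nat.lt_or_ge (j + 1) ((pairList p).enum).length with hj1 | hj1
        · have hj1P : j + 1 < (pairList p).length := by simpa using hj1
          have hdrop2 : tailT (((pairList p).enum).drop (j + 1))
              = chHash (j + 2) :: (bodyOf (((pairList p).enum)[j+1]'hj1)
                ++ tailT (((pairList p).enum).drop (j + 2))) := by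
            rw [List.drop_eq_getElem_cons hj1, tailT_cons]
            rw [show ((((pairList p).enum)[j+1]'hj1).1 + 1) = j + 2 by rw [enum_fst hj1P]]
            rfl
          have hc : ((TEnd p).drop (((FS p).take k).flatten).length)[
              (bodyOf (((pairList p).enum)[j]'hjV)).length]? = some (chHash (j + 2)) := by
            rw [hpre]
            conv_lhs => rw [hdec2]
            rw [List.drop_left, hdrop2, List.getElem?_append_right le_rfl]
            simp
          have hnot : chHash (j + 2)
              ∉ (TEnd p).take (((FS p).take k).flatten).length := by
            rw [hpre, hdec2, List.take_left]
            intro hmem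
            rcases List.mem_append.mp hmem with hmem | hmem
            · rcases List.mem_append.mp hmem with hmem | hmem
              · exact hash_not_mem_base _ _ hmem
              · exact hash_not_mem_tailT (fun v hv => by have := enum_take_fst hv; omega) hmem
            · simp [chHash] at hmem
          have hbd := lzend_bound hT hc hnot hocc
          rw [hget]
          exact hbd
        · have hdropnil : ((pairList p).enum).drop (j + 1) = [] :=
            List.drop_eq_nil_of_le hj1
          have hTd : (TEnd p).drop (((FS p).take k).flatten).length
              = bodyOf (((pairList p).enum)[j]'hjV) := by
            rw [hpre]
            conv_lhs => rw [hdec2]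
            rw [List.drop_left, hdropnil]
            simp [tailT]
          have h2 : (TEnd p).length - (((FS p).take k).flatten).length
              = (bodyOf (((pairList p).enum)[j]'hjV)).length := by
            rw [← List.length_drop, hTd]
          rw [hget]
          omega
      · -- occurrence
        right
        refine ⟨p + 1 + (pairList p)[j].2, by omega, ?_⟩
        rw [hget, hbody, FS_take_head (by omega), baseStr_take hbnd.2.2.2]
        exact body_suffix hbnd.2.1


lemma sum_range_succ' (f : ℕ → ℕ) (n : ℕ) :
    ((List.range (n + 1)).map f).sum = ((List.range n).map f).sum + f n := by
  rw [List.range_succ]; simp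

def gcnt (p k : ℕ) : ℕ := min p (k - 1) + 1 - max 1 (k - p)

lemma S_le (p : ℕ) : ∀ n, n ≤ p →
    2 * (((List.range n).map fun i => gcnt p (2 + i)).sum) = n * (n + 1) := by
  intro n
  induction n with
  | zero => simp
  | succ n ih =>
    intro h
    have hg : gcnt p (2 + n) = n + 1 := by unfold gcnt; omega
    rw [sum_range_succ', hg, Nat.mul_add, ih (by omega)]
    ring

lemma S_ge (p : ℕ) (hp : 1 ≤ p) : ∀ m, m ≤ p - 1 →
    2 * (((List.range (p + m)).map fun i => gcnt p (2 + i)).sum) + m * m + m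
      = p * (p + 1) + 2 * m * p := by
  intro m
  induction m with
  | zero => simpa using S_le p p le_rfl
  | succ m ih =>
    intro h
    have hrec : p + (m + 1) = (p + m) + 1 := by omega
    have hg : gcnt p (2 + (p + m)) = p - m - 1 := by unfold gcnt; omega
    have ih' := ih (by omega)
    rw [hrec, sum_range_succ', hg, Nat.mul_add]
    zify [show m ≤ p by omega, show 1 ≤ p - m by omega] at ih' ⊢
    linear_combination ih'

lemma pairList_length (p : ℕ) (hp : 2 ≤ p) : (pairList p).length = p * p := by
  have h1 : (pairList p).length = ((List.range (2 * p - 1)).map fun i => gcnt p (2 + i)).sum := by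
    rw [pairList, List.length_flatten, List.map_map, List.range'_eq_map_range, List.map_map]
    congr 1
    apply List.map_congr_left
    intro k hk
    simp [gcnt, Function.comp]
  have h2 := S_ge p (by omega) (p - 1) le_rfl
  have h3 : p + (p - 1) = 2 * p - 1 := by omega
  rw [h3] at h2
  rw [h1]
  have h4 : 2 * (((List.range (2 * p - 1)).map fun i => gcnt p (2 + i)).sum) = 2 * (p * p) := by
    zify [show 1 ≤ p by omega] at h2 ⊢
    linear_combination h2
  omega

/-- The greedy LZ-End factorization of `T` has exactly `2p² + 2p + 1` phrases. -/
theorem stmt16 (p : ℕ) (hp : 2 ≤ p) :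
    (∃ fs, IsGreedyLZEnd (TEnd p) fs) ∧
    (∀ fs, IsGreedyLZEnd (TEnd p) fs → fs.length = 2 * p ^ 2 + 2 * p + 1) := by
  refine ⟨⟨FS p, FS_greedy p hp⟩, fun fs hfs => ?_⟩
  rw [lzend_unique hfs (FS_greedy p hp), FS_length, pairList_length p hp]
  ring
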